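/- If S is a clique and T is a coclique (independent set) in a 1-walk regular graph G on n vertices, then |S|·|T| ≤ n. -/

import Mathlib

set_option maxHeartbeats 1000000

open Matrix Polynomial Finset

section AuxCC

variable {N : Type*} [Fintype N] [DecidableEq N] {A : Matrix N N ℝ} (hA : A.IsHermitian)

private lemma cc_pow_spectral (k : ℕ) :
    A ^ k = (hA.eigenvectorUnitary : Matrix N N ℝ)
      * diagonal (fun i => hA.eigenvalues i ^ k)
      * star (hA.eigenvectorUnitary : Matrix N N ℝ) := by
  have hUU : star (hA.eigenvectorUnitary : Matrix N N ℝ) * hA.eigenvectorUnitary = 1 :=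
    Unitary.star_mul_self_of_mem (SetLike.coe_mem _)
  have hUU' : (hA.eigenvectorUnitary : Matrix N N ℝ) * star (hA.eigenvectorUnitary : Matrix N N ℝ) = 1 :=
    Unitary.mul_star_self_of_mem (SetLike.coe_mem _)
  set U : Matrix N N ℝ := (hA.eigenvectorUnitary : Matrix N N ℝ) with hU
  induction k with
  | zero => simp [pow_zero, diagonal_one, hUU']
  | succ k ih =>
      have hs : A = U * diagonal (fun i => hA.eigenvalues i) * star U := hA.spectral_theorem
      calc A ^ (k+1) = (U * diagonal (fun i => hA.eigenvalues i ^ k) * star U)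
            * (U * diagonal (fun i => hA.eigenvalues i) * star U) := by
              rw [pow_succ, ih]; rw [← hs]
        _ = U * (diagonal (fun i => hA.eigenvalues i ^ k) * (star U * U)
              * diagonal (fun i => hA.eigenvalues i)) * star U := by
            simp only [mul_assoc]
        _ = U * diagonal (fun i => hA.eigenvalues i ^ (k+1)) * star U := by
            rw [hUU, mul_one, diagonal_mul_diagonal]
            congr 2 with i

private lemma cc_aeval_spectral (q : ℝ[X]) :
    aeval A q = (hA.eigenvectorUnitary : Matrix N N ℝ)
      * diagonal (fun i => q.eval (hA.eigenvalues i))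
      * star (hA.eigenvectorUnitary : Matrix N N ℝ) := by
  induction q using Polynomial.induction_on' with
  | add p q hp hq =>
      have hd : diagonal (fun i => eval (hA.eigenvalues i) (p + q))
          = diagonal (fun i => eval (hA.eigenvalues i) p)
            + diagonal (fun i => eval (hA.eigenvalues i) q) := by
        ext i j
        by_cases h : i = j <;> simp [h, diagonal_apply]
      rw [map_add, hp, hq, hd, Matrix.mul_add, Matrix.add_mul]
  | monomial k c =>
      have hd : diagonal (fun i => (monomial k c).eval (hA.eigenvalues i))
          = c • diagonal (fun i => hA.eigenvalues i ^ k) := by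
        ext i j
        by_cases h : i = j <;> simp [h, diagonal_apply, eval_monomial]
      rw [aeval_monomial, ← Algebra.smul_def, cc_pow_spectral hA k, hd,
        Matrix.mul_smul, Matrix.smul_mul]

private lemma cc_conj_mul {U M M' : Matrix N N ℝ} (hU : star U * U = 1) :
    (U * M * star U) * (U * M' * star U) = U * (M * M') * star U := by
  simp only [mul_assoc]
  rw [← mul_assoc (star U) U (M' * star U), hU, one_mul]

private lemma cc_trace_conj {U M : Matrix N N ℝ} (hU : star U * U = 1) :
    Matrix.trace (U * M * star U) = Matrix.trace M := by
  rw [Matrix.trace_mul_comm, ← mul_assoc, hU, one_mul]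

private lemma cc_sum_ind_left (S : Finset N) (f : N → ℝ) :
    ∑ u, (if u ∈ S then (1:ℝ) else 0) * f u = ∑ u ∈ S, f u := by
  rw [Finset.sum_congr rfl (g := fun u => if u ∈ S then f u else 0)
    (fun u _ => by rw [ite_mul, one_mul, zero_mul]), Finset.sum_ite_mem, Finset.univ_inter]

private lemma cc_sum_ind_right (S : Finset N) (f : N → ℝ) :
    ∑ u, f u * (if u ∈ S then (1:ℝ) else 0) = ∑ u ∈ S, f u := by
  rw [Finset.sum_congr rfl (g := fun u => if u ∈ S then f u else 0)
    (fun u _ => by rw [mul_ite, mul_one, mul_zero]), Finset.sum_ite_mem, Finset.univ_inter]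

end AuxCC

private lemma cc_key {n : ℕ} (G : SimpleGraph (Fin n)) [DecidableRel G.Adj]
    (hdiag : ∀ k : ℕ, 0 < k → ∀ u v, ((G.adjMatrix ℝ) ^ k) u u = ((G.adjMatrix ℝ) ^ k) v v)
    (hedge : ∀ k : ℕ, 0 < k → ∀ u v u' v', G.Adj u v → G.Adj u' v' →
      ((G.adjMatrix ℝ) ^ k) u v = ((G.adjMatrix ℝ) ^ k) u' v')
    (S T : Finset (Fin n))
    (hS : G.IsClique (S : Set (Fin n)))
    (hT : ∀ u ∈ T, ∀ v ∈ T, ¬ G.Adj u v) :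
    S.card * T.card ≤ n := by
  rcases Nat.eq_zero_or_pos T.card with ht0 | htpos
  · rw [ht0, mul_zero]; exact Nat.zero_le n
  rcases le_or_gt S.card 1 with hs1 | hs2
  · calc S.card * T.card ≤ 1 * T.card := Nat.mul_le_mul_right _ hs1
      _ = T.card := one_mul _
      _ ≤ n := by simpa using T.card_le_univ
  set A : Matrix (Fin n) (Fin n) ℝ := G.adjMatrix ℝ with hAdef
  have hdot : ∀ (a b : Fin n → ℝ), a ⬝ᵥ b = ∑ u, a u * b u := fun a b => rfl
  have hmvdef : ∀ (M : Matrix (Fin n) (Fin n) ℝ) (v : Fin n → ℝ) (u : Fin n),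
      (M *ᵥ v) u = ∑ x, M u x * v x := fun M v u => rfl
  have hA : A.IsHermitian := by
    ext i j
    simp [hAdef, Matrix.conjTranspose_apply, SimpleGraph.adjMatrix_apply, SimpleGraph.adj_comm]
  set μ : Fin n → ℝ := hA.eigenvalues with hμdef
  set U : Matrix (Fin n) (Fin n) ℝ := (hA.eigenvectorUnitary : Matrix (Fin n) (Fin n) ℝ) with hUdef
  have hUU : star U * U = 1 := Unitary.star_mul_self_of_mem (SetLike.coe_mem _)
  have hspec : A = U * diagonal (fun i => μ i) * star U := hA.spectral_theorem
  obtain ⟨u₀, hu₀, v₀, hv₀, hne₀⟩ := Finset.one_lt_card.mp hs2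
  have hadj₀ : G.Adj u₀ v₀ := hS (Finset.mem_coe.mpr hu₀) (Finset.mem_coe.mpr hv₀) hne₀
  haveI : Nonempty (Fin n) := ⟨u₀⟩
  have hn_pos : (0:ℝ) < n := by exact_mod_cast u₀.pos
  have hA01 : ∀ u v, A u v = if G.Adj u v then (1:ℝ) else 0 := fun u v => by
    simp [hAdef, SimpleGraph.adjMatrix_apply]
  have hAsymm : ∀ u v, A u v = A v u := fun u v => by
    rw [hA01, hA01]; simp [SimpleGraph.adj_comm]
  set d : ℝ := ((A ^ 2) u₀ u₀) with hddef
  have hrowsq : ∀ u, (A ^ 2) u u = ∑ v, A u v := by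
    intro u
    rw [pow_two, Matrix.mul_apply]
    refine Finset.sum_congr rfl fun v _ => ?_
    rw [hA01, hA01]
    by_cases h : G.Adj u v
    · simp [h, G.adj_symm h]
    · simp [h, fun hc => h (G.adj_symm hc)]
  have hrow : ∀ u, ∑ v, A u v = d := by
    intro u
    rw [← hrowsq u, hddef, hdiag 2 two_pos u u₀]
  have hcol : ∀ v, ∑ u, A u v = d := by
    intro v
    rw [← hrow v]
    exact Finset.sum_congr rfl fun u _ => hAsymm u v
  have hApos : ∀ u v, 0 ≤ A u v := by
    intro u v; rw [hA01]; split <;> norm_num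
  have hd_pos : (0:ℝ) < d := by
    have h1 : A u₀ v₀ = 1 := by rw [hA01]; simp [hadj₀]
    have h2 : A u₀ v₀ ≤ ∑ v, A u₀ v := Finset.single_le_sum (f := fun v => A u₀ v)
      (fun v _ => hApos u₀ v) (Finset.mem_univ v₀)
    rw [hrow u₀, h1] at h2
    linarith
  set τ : ℝ := Finset.univ.inf' Finset.univ_nonempty μ with hτdef
  have hτ_le : ∀ i, τ ≤ μ i := fun i => Finset.inf'_le _ (Finset.mem_univ i)
  obtain ⟨j₀, -, hj₀⟩ := Finset.exists_mem_eq_inf' (Finset.univ_nonempty (α := Fin n)) μ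
  have htrA : ∑ i, μ i = 0 := by
    have h1 : Matrix.trace A = 0 := by rw [hAdef]; exact SimpleGraph.trace_adjMatrix ℝ G
    have h2 : Matrix.trace A = ∑ i, μ i := by
      rw [hspec, cc_trace_conj hUU, Matrix.trace_diagonal]
    linarith
  have hdiagconst : ∀ u, (A ^ 2) u u = d := fun u => by
    rw [hddef]; exact hdiag 2 two_pos u u₀
  have htrA2 : ∑ i, μ i ^ 2 = n * d := by
    have h2 : Matrix.trace (A ^ 2) = ∑ i, μ i ^ 2 := by
      rw [cc_pow_spectral hA 2, cc_trace_conj hUU, Matrix.trace_diagonal]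
    have h3 : Matrix.trace (A ^ 2) = ∑ u : Fin n, (A ^ 2) u u := rfl
    rw [h3, Finset.sum_congr rfl fun u _ => hdiagconst u, Finset.sum_const, Finset.card_univ,
      Fintype.card_fin, nsmul_eq_mul] at h2
    linarith
  have hτ_neg : τ < 0 := by
    by_contra h
    push_neg at h
    have hz : ∀ i, μ i = 0 := by
      intro i
      have h1 : ∀ j, 0 ≤ μ j := fun j => le_trans h (hτ_le j)
      exact (Finset.sum_eq_zero_iff_of_nonneg (fun j _ => h1 j)).mp htrA i (Finset.mem_univ i)
    have hzz : ∑ i, μ i ^ 2 = 0 := Finset.sum_eq_zero fun i _ => by rw [hz i]; ring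
    rw [htrA2] at hzz
    nlinarith
  set F : Finset (Fin n) := Finset.univ.filter (fun j => μ j ≠ τ) with hFdef
  set q : ℝ[X] := ∏ j ∈ F, (C (μ j) - X) with hqdef
  set w : Fin n → ℝ := fun i => ∏ j ∈ F, (μ j - μ i) with hwdef
  have hqeval : ∀ x : ℝ, q.eval x = ∏ j ∈ F, (μ j - x) := by
    intro x
    rw [hqdef, Polynomial.eval_prod]
    exact Finset.prod_congr rfl fun j _ => by simp
  set P : Matrix (Fin n) (Fin n) ℝ := aeval A q with hPdef
  have hPspec : P = U * diagonal w * star U := by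
    have hfun : (fun i => q.eval (μ i)) = w := funext fun i => hqeval (μ i)
    rw [hPdef, cc_aeval_spectral hA q, hfun]
  have hw0 : ∀ i, 0 ≤ w i := by
    intro i
    rcases eq_or_ne (μ i) τ with h | h
    · exact Finset.prod_nonneg fun j _ => by rw [h]; linarith [hτ_le j]
    · have hi : i ∈ F := by rw [hFdef]; simp [h]
      show (0:ℝ) ≤ ∏ j ∈ F, (μ j - μ i)
      exact le_of_eq (Finset.prod_eq_zero hi (by ring)).symm
  have hwj₀ : 0 < w j₀ := by
    show 0 < ∏ j ∈ F, (μ j - μ j₀)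
    refine Finset.prod_pos fun j hj => ?_
    have hjne : μ j ≠ τ := by rw [hFdef] at hj; simpa using hj
    have h2 : τ < μ j := lt_of_le_of_ne (hτ_le j) (Ne.symm hjne)
    rw [← hj₀]
    linarith
  have hwμ : ∀ i, w i * μ i = τ * w i := by
    intro i
    rcases eq_or_ne (μ i) τ with h | h
    · rw [h]; ring
    · have hi : i ∈ F := by rw [hFdef]; simp [h]
      show (∏ j ∈ F, (μ j - μ i)) * μ i = τ * ∏ j ∈ F, (μ j - μ i)
      rw [Finset.prod_eq_zero hi (by ring)]
      ring
  have hPA : P * A = τ • P := by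
    rw [hPspec]
    nth_rewrite 1 [hspec]
    rw [cc_conj_mul hUU, diagonal_mul_diagonal]
    have hdd : (diagonal (fun i => w i * μ i)) = τ • diagonal w := by
      ext i j
      rcases eq_or_ne i j with rfl | h
      · simp only [diagonal_apply_eq, Matrix.smul_apply, smul_eq_mul]
        exact hwμ i
      · simp [Matrix.diagonal_apply_ne _ h, Matrix.smul_apply]
    rw [hdd, Matrix.mul_smul, Matrix.smul_mul]
  set tr : ℝ := ∑ i, w i with htrdef
  have htr_pos : 0 < tr := by
    rw [htrdef]
    exact Finset.sum_pos' (fun i _ => hw0 i) ⟨j₀, Finset.mem_univ j₀, hwj₀⟩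
  have hPtr : ∑ u, P u u = tr := by
    have h1 : Matrix.trace P = tr := by
      rw [hPspec, cc_trace_conj hUU, Matrix.trace_diagonal]
    rw [← h1]; rfl
  have hPentry : ∀ u v : Fin n, P u v
      = ∑ k ∈ Finset.range (q.natDegree + 1), q.coeff k * ((A ^ k) u v) := by
    intro u v
    rw [hPdef, Polynomial.aeval_eq_sum_range, Matrix.sum_apply]
    exact Finset.sum_congr rfl fun k _ => by rw [Matrix.smul_apply, smul_eq_mul]
  set α : ℝ := P u₀ u₀ with hαdef
  set β : ℝ := P u₀ v₀ with hβdef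
  have hPc : ∀ u, P u u = α := by
    intro u
    rw [hαdef, hPentry, hPentry]
    refine Finset.sum_congr rfl fun k _ => ?_
    rcases Nat.eq_zero_or_pos k with hk | hk
    · subst hk; rw [pow_zero, Matrix.one_apply_eq, Matrix.one_apply_eq]
    · rw [hdiag k hk u u₀]
  have hPe : ∀ u v, G.Adj u v → P u v = β := by
    intro u v huv
    rw [hβdef, hPentry, hPentry]
    refine Finset.sum_congr rfl fun k _ => ?_
    rcases Nat.eq_zero_or_pos k with hk | hk
    · subst hk
      rw [pow_zero, Matrix.one_apply_ne huv.ne, Matrix.one_apply_ne hadj₀.ne]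
    · rw [hedge k hk u v u₀ v₀ huv hadj₀]
  have hα_tr : (n:ℝ) * α = tr := by
    rw [← hPtr, Finset.sum_congr rfl fun u _ => hPc u, Finset.sum_const, Finset.card_univ,
      Fintype.card_fin, nsmul_eq_mul]
  have hα_pos : 0 < α := by
    by_contra h
    push_neg at h
    nlinarith
  have hPAdiag : ∀ u, (P * A) u u = τ * P u u := fun u => by
    rw [hPA, Matrix.smul_apply, smul_eq_mul]
  have hPAsum : ∑ u, (P * A) u u = τ * tr := by
    rw [Finset.sum_congr rfl fun u _ => hPAdiag u, ← Finset.mul_sum, hPtr]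
  have hPAsum2 : ∑ u, (P * A) u u = β * ((n:ℝ) * d) := by
    have h1 : ∀ u, (P * A) u u = ∑ v, β * A v u := by
      intro u
      rw [Matrix.mul_apply]
      refine Finset.sum_congr rfl fun v _ => ?_
      by_cases h : G.Adj u v
      · rw [hPe u v h, hAsymm v u]
      · rw [hA01 v u, if_neg (fun hc => h (G.adj_symm hc)), mul_zero, mul_zero]
    have h2 : ∀ u : Fin n, ∑ v, β * A v u = β * d := by
      intro u
      rw [← Finset.mul_sum, hcol u]
    rw [Finset.sum_congr rfl fun u _ => h1 u, Finset.sum_congr rfl fun u _ => h2 u,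
      Finset.sum_const, Finset.card_univ, Fintype.card_fin, nsmul_eq_mul]
    ring
  have hβd : β * d = τ * α := by
    have h : β * ((n:ℝ) * d) = τ * tr := hPAsum2.symm.trans hPAsum
    have h2 : (n:ℝ) * (β * d) = (n:ℝ) * (τ * α) := by
      calc (n:ℝ) * (β * d) = β * ((n:ℝ) * d) := by ring
        _ = τ * tr := h
        _ = τ * ((n:ℝ) * α) := by rw [← hα_tr]
        _ = (n:ℝ) * (τ * α) := by ring
    exact mul_left_cancel₀ (ne_of_gt hn_pos) h2
  -- clique bound
  have hPSD : P.PosSemidef := by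
    rw [hPspec, Matrix.star_eq_conjTranspose]
    exact (Matrix.PosSemidef.diagonal (fun i => hw0 i)).mul_mul_conjTranspose_same U
  set x : Fin n → ℝ := fun u => if u ∈ S then (1:ℝ) else 0 with hxdef
  have hcliqQF : 0 ≤ (S.card : ℝ) * (α + ((S.card : ℝ) - 1) * β) := by
    have h0 : 0 ≤ x ⬝ᵥ P *ᵥ x := by
      have h0' := hPSD.dotProduct_mulVec_nonneg x
      rwa [star_trivial] at h0'
    have hmv : ∀ u, (P *ᵥ x) u = ∑ v ∈ S, P u v := by
      intro u
      rw [hmvdef, hxdef]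
      exact cc_sum_ind_right S (fun v => P u v)
    have h1 : x ⬝ᵥ P *ᵥ x = ∑ u ∈ S, ∑ v ∈ S, P u v := by
      rw [hdot, Finset.sum_congr rfl fun u _ => by rw [hmv u], hxdef]
      exact cc_sum_ind_left S _
    have h2 : ∀ u ∈ S, ∑ v ∈ S, P u v = α + ((S.card : ℝ) - 1) * β := by
      intro u hu
      rw [← Finset.add_sum_erase _ _ hu, hPc u]
      congr 1
      have he : ∀ v ∈ S.erase u, P u v = β := by
        intro v hv
        exact hPe u v (hS (Finset.mem_coe.mpr hu)
          (Finset.mem_coe.mpr (Finset.mem_of_mem_erase hv))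
          (Ne.symm (Finset.ne_of_mem_erase hv)))
      rw [Finset.sum_congr rfl he, Finset.sum_const, Finset.card_erase_of_mem hu,
        nsmul_eq_mul, Nat.cast_sub (by omega), Nat.cast_one]
    rw [h1, Finset.sum_congr rfl h2, Finset.sum_const, nsmul_eq_mul] at h0
    exact h0
  have hs2' : (2:ℝ) ≤ (S.card : ℝ) := by exact_mod_cast hs2
  have hclique : 0 ≤ d + ((S.card : ℝ) - 1) * τ := by
    have hstep1 : 0 ≤ α + ((S.card:ℝ)-1)*β := by
      by_contra h
      push_neg at h
      have := mul_pos (lt_of_lt_of_le two_pos hs2') (neg_pos.mpr h)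
      nlinarith [hcliqQF]
    have hstep2 : 0 ≤ α*d + ((S.card:ℝ)-1)*(β*d) := by
      nlinarith [mul_nonneg hstep1 hd_pos.le]
    rw [hβd] at hstep2
    by_contra hcon
    push_neg at hcon
    nlinarith [mul_pos hα_pos (neg_pos.mpr hcon), hstep2]
  -- coclique bound
  have hBPSD : (A - τ • (1 : Matrix (Fin n) (Fin n) ℝ)).PosSemidef := by
    have hdd : diagonal (fun i => μ i) - diagonal (fun _ : Fin n => τ)
        = diagonal (fun i => μ i - τ) := by
      ext i j
      by_cases h : i = j <;> simp [h, diagonal_apply, Matrix.sub_apply]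
    have h1 : τ • (1 : Matrix (Fin n) (Fin n) ℝ) = U * diagonal (fun _ : Fin n => τ) * star U := by
      have hone : (diagonal (fun _ : Fin n => τ)) = τ • (1 : Matrix (Fin n) (Fin n) ℝ) := by
        ext i j
        rcases eq_or_ne i j with rfl | h
        · simp [Matrix.diagonal_apply_eq, Matrix.smul_apply, Matrix.one_apply_eq]
        · simp [Matrix.diagonal_apply_ne _ h, Matrix.smul_apply, Matrix.one_apply_ne h]
      rw [hone, Matrix.mul_smul, Matrix.mul_one, Matrix.smul_mul]
      congr 1
      exact (Unitary.mul_star_self_of_mem (SetLike.coe_mem _)).symm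
    have hB : A - τ • (1 : Matrix (Fin n) (Fin n) ℝ) = U * diagonal (fun i => μ i - τ) * star U := by
      nth_rewrite 1 [hspec]
      rw [h1, ← Matrix.sub_mul, ← Matrix.mul_sub, hdd]
    rw [hB, Matrix.star_eq_conjTranspose]
    exact (Matrix.PosSemidef.diagonal
      (fun i => sub_nonneg.mpr (hτ_le i))).mul_mul_conjTranspose_same U
  set t : ℝ := (T.card : ℝ) with htdef
  set y : Fin n → ℝ := fun u => if u ∈ T then (1:ℝ) else 0 with hydef
  set o : Fin n → ℝ := fun _ => (1:ℝ) with hodef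
  set z : Fin n → ℝ := (n:ℝ) • y - t • o with hzdef
  have hAo : A *ᵥ o = fun _ => d := by
    funext u
    rw [hmvdef]
    simp only [hodef, mul_one]
    exact hrow u
  have hAy : A *ᵥ y = fun u => ∑ v ∈ T, A u v := by
    funext u
    rw [hmvdef, hydef]
    exact cc_sum_ind_right T (fun v => A u v)
  have q1 : y ⬝ᵥ (A *ᵥ y) = 0 := by
    rw [hAy, hdot, hydef, cc_sum_ind_left T _]
    refine Finset.sum_eq_zero fun u hu => Finset.sum_eq_zero fun v hv => ?_
    rw [hA01, if_neg (hT u hu v hv)]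
  have q2 : y ⬝ᵥ (A *ᵥ o) = t * d := by
    rw [hAo, hdot, hydef, cc_sum_ind_left T _, Finset.sum_const, nsmul_eq_mul, htdef]
  have q3 : o ⬝ᵥ (A *ᵥ y) = t * d := by
    rw [hAy, hdot]
    simp only [hodef, one_mul]
    rw [Finset.sum_comm (f := fun u v => A u v), Finset.sum_congr rfl fun v _ => hcol v, Finset.sum_const,
      nsmul_eq_mul, htdef]
  have q4 : o ⬝ᵥ (A *ᵥ o) = (n:ℝ) * d := by
    rw [hAo, hdot]
    simp only [hodef, one_mul]
    rw [Finset.sum_const, Finset.card_univ, Fintype.card_fin, nsmul_eq_mul]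
  have f1 : y ⬝ᵥ y = t := by
    rw [hdot, hydef, cc_sum_ind_left T _]
    rw [Finset.sum_congr rfl fun u hu => if_pos hu, Finset.sum_const, nsmul_eq_mul,
      mul_one, htdef]
  have f2 : y ⬝ᵥ o = t := by
    rw [hdot, hydef, cc_sum_ind_left T _]
    simp only [hodef]
    rw [Finset.sum_const, nsmul_eq_mul, mul_one, htdef]
  have f3 : o ⬝ᵥ y = t := by
    rw [hdot]
    simp only [hodef, one_mul, hydef]
    rw [Finset.sum_ite_mem, Finset.univ_inter, Finset.sum_const, nsmul_eq_mul, mul_one, htdef]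
  have f4 : o ⬝ᵥ o = (n:ℝ) := by
    rw [hdot]
    simp only [hodef, mul_one]
    rw [Finset.sum_const, Finset.card_univ, Fintype.card_fin, nsmul_eq_mul, mul_one]
  have g1 : z ⬝ᵥ (A *ᵥ z) = -(n:ℝ)*t^2*d := by
    rw [hzdef, Matrix.mulVec_sub, Matrix.mulVec_smul, Matrix.mulVec_smul]
    simp only [sub_dotProduct, dotProduct_sub, smul_dotProduct,
      dotProduct_smul, smul_eq_mul, q1, q2, q3, q4]
    ring
  have g2 : z ⬝ᵥ z = (n:ℝ)^2*t - (n:ℝ)*t^2 := by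
    rw [hzdef]
    simp only [sub_dotProduct, dotProduct_sub, smul_dotProduct,
      dotProduct_smul, smul_eq_mul, f1, f2, f3, f4]
    ring
  have hcoc : 0 ≤ -(n:ℝ)*t^2*d - τ*((n:ℝ)^2*t - (n:ℝ)*t^2) := by
    have h0 : 0 ≤ z ⬝ᵥ ((A - τ • (1 : Matrix (Fin n) (Fin n) ℝ)) *ᵥ z) := by
      have h0' := hBPSD.dotProduct_mulVec_nonneg z
      rwa [star_trivial] at h0'
    rw [Matrix.sub_mulVec, Matrix.smul_mulVec, Matrix.one_mulVec,
      dotProduct_sub, dotProduct_smul, smul_eq_mul, g1, g2] at h0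
    exact h0
  have htR : (1:ℝ) ≤ t := by rw [htdef]; exact_mod_cast htpos
  have ht_pos : (0:ℝ) < t := lt_of_lt_of_le one_pos htR
  have h6 : (d - τ) * t ≤ -τ * n := by
    by_contra hcon
    push_neg at hcon
    have hp : 0 < (d - τ)*t + τ*(n:ℝ) := by linarith
    have hprod := mul_pos (mul_pos hn_pos ht_pos) hp
    linarith only [hcoc, hprod]
  have h7 : (S.card : ℝ) * (-τ) ≤ d - τ := by nlinarith [hclique]
  have h8 : (S.card : ℝ) * t ≤ n := by
    have h9 : (S.card : ℝ) * (-τ) * t ≤ (d - τ) * t :=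
      mul_le_mul_of_nonneg_right h7 (by linarith)
    have h10 : (S.card : ℝ) * (-τ) * t ≤ -τ * n := le_trans h9 h6
    have hτ' : (0:ℝ) < -τ := by linarith
    by_contra hcon
    push_neg at hcon
    have hlt := mul_lt_mul_of_pos_left hcon hτ'
    linarith only [h10, hlt]
  rw [htdef] at h8
  exact_mod_cast h8

/-- Clique-coclique bound for 1-walk regular graphs: if S is a clique and T a
coclique in a 1-walk regular graph on n vertices, then |S|·|T| ≤ n. -/
theorem clique_coclique_one_walk_regular {n : ℕ}
    (G : SimpleGraph (Fin n)) [DecidableRel G.Adj]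
    (hwalk : ∀ k : ℕ, 0 < k → ∃ a b : ℂ,
      Matrix.hadamard ((G.adjMatrix ℂ) ^ k) 1 = a • (1 : Matrix (Fin n) (Fin n) ℂ) ∧
      Matrix.hadamard ((G.adjMatrix ℂ) ^ k) (G.adjMatrix ℂ) = b • G.adjMatrix ℂ)
    (S T : Finset (Fin n))
    (hS : G.IsClique (S : Set (Fin n)))
    (hT : ∀ u ∈ T, ∀ v ∈ T, ¬ G.Adj u v) :
    S.card * T.card ≤ n := by
  have hmap : (G.adjMatrix ℂ) = (G.adjMatrix ℝ).map (algebraMap ℝ ℂ) := by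
    ext u v
    by_cases h : G.Adj u v <;> simp [h, SimpleGraph.adjMatrix_apply, Matrix.map_apply]
  have hpow : ∀ k : ℕ, (G.adjMatrix ℂ) ^ k = ((G.adjMatrix ℝ) ^ k).map (algebraMap ℝ ℂ) := by
    intro k
    rw [hmap, ← RingHom.mapMatrix_apply, ← map_pow, RingHom.mapMatrix_apply]
  have hdiag : ∀ k : ℕ, 0 < k → ∀ u v,
      ((G.adjMatrix ℝ) ^ k) u u = ((G.adjMatrix ℝ) ^ k) v v := by
    intro k hk u v
    obtain ⟨a, b, h1, _⟩ := hwalk k hk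
    have e : ∀ w : Fin n, ((G.adjMatrix ℂ) ^ k) w w = a := by
      intro w
      have := congrFun (congrFun h1 w) w
      simpa [Matrix.hadamard_apply, Matrix.one_apply] using this
    have : ((G.adjMatrix ℂ) ^ k) u u = ((G.adjMatrix ℂ) ^ k) v v := by rw [e u, e v]
    rw [hpow k] at this
    simp only [Matrix.map_apply, Complex.coe_algebraMap] at this
    exact_mod_cast this
  have hedge : ∀ k : ℕ, 0 < k → ∀ u v u' v', G.Adj u v → G.Adj u' v' →
      ((G.adjMatrix ℝ) ^ k) u v = ((G.adjMatrix ℝ) ^ k) u' v' := by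
    intro k hk u v u' v' huv huv'
    obtain ⟨a, b, _, h2⟩ := hwalk k hk
    have e : ∀ w w' : Fin n, G.Adj w w' → ((G.adjMatrix ℂ) ^ k) w w' = b := by
      intro w w' hww
      have := congrFun (congrFun h2 w) w'
      simpa [Matrix.hadamard_apply, SimpleGraph.adjMatrix_apply, hww] using this
    have : ((G.adjMatrix ℂ) ^ k) u v = ((G.adjMatrix ℂ) ^ k) u' v' := by
      rw [e u v huv, e u' v' huv']
    rw [hpow k] at this
    simp only [Matrix.map_apply, Complex.coe_algebraMap] at this
    exact_mod_cast this
  exact cc_key G hdiag hedge S T hS hT
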